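/- arXiv:2105.13513 — 4 statements merged into one kernel-verified Lean document; each statement's English description precedes it below -/
import Mathlib

section
/- Let L be a positive integer and let p_1, ..., p_k (with k ≥ 2) be distinct odd primes, each dividing the Fibonacci number F_L, such that for each i, p_i ≡ 1 (mod L) or p_i ≡ -1 (mod L). Then the product P = p_1 · p_2 · ... · p_k is a Fibonacci pseudoprime; that is, P is an odd composite number satisfying P | F_{P - (5/P)}, where (5/P) denotes the Jacobi symbol. -/
set_option linter.unreachableTactic false
set_option linter.unusedTactic false

def FR (n : ℕ) : Type := ZMod n × ZMod n

namespace FR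
variable {n : ℕ}

instance : Add (FR n) := ⟨fun x y => (x.1 + y.1, x.2 + y.2)⟩
instance : Mul (FR n) := ⟨fun x y => (x.1 * y.1 + x.2 * y.2, x.1 * y.2 + x.2 * y.1 + x.2 * y.2)⟩
instance : Neg (FR n) := ⟨fun x => (-x.1, -x.2)⟩
instance : Zero (FR n) := ⟨((0 : ZMod n), (0 : ZMod n))⟩
instance : One (FR n) := ⟨((1 : ZMod n), (0 : ZMod n))⟩
instance : NatCast (FR n) := ⟨fun m => (((m : ℕ) : ZMod n), (0 : ZMod n))⟩

@[simp] lemma fst_add (x y : FR n) : (x + y).1 = x.1 + y.1 := rfl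
@[simp] lemma snd_add (x y : FR n) : (x + y).2 = x.2 + y.2 := rfl
@[simp] lemma fst_mul (x y : FR n) : (x * y).1 = x.1 * y.1 + x.2 * y.2 := rfl
@[simp] lemma snd_mul (x y : FR n) : (x * y).2 = x.1 * y.2 + x.2 * y.1 + x.2 * y.2 := rfl
@[simp] lemma fst_neg (x : FR n) : (-x).1 = -x.1 := rfl
@[simp] lemma snd_neg (x : FR n) : (-x).2 = -x.2 := rfl
@[simp] lemma fst_zero : (0 : FR n).1 = 0 := rfl
@[simp] lemma snd_zero : (0 : FR n).2 = 0 := rfl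
@[simp] lemma fst_one : (1 : FR n).1 = 1 := rfl
@[simp] lemma snd_one : (1 : FR n).2 = 0 := rfl
@[simp] lemma fst_natCast (m : ℕ) : ((m : FR n)).1 = (m : ZMod n) := rfl
@[simp] lemma snd_natCast (m : ℕ) : ((m : FR n)).2 = 0 := rfl

private lemma ext' {x y : FR n} (h1 : x.1 = y.1) (h2 : x.2 = y.2) : x = y := by
  cases x; cases y; simp_all; rfl

instance : CommRing (FR n) where
  add_assoc a b c := ext' (by simp; ring) (by simp; ring)
  zero_add a := ext' (by simp) (by simp)
  add_zero a := ext' (by simp) (by simp)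
  add_comm a b := ext' (by simp; ring) (by simp; ring)
  left_distrib a b c := ext' (by simp; ring) (by simp; ring)
  right_distrib a b c := ext' (by simp; ring) (by simp; ring)
  zero_mul a := ext' (by simp) (by simp)
  mul_zero a := ext' (by simp) (by simp)
  mul_assoc a b c := ext' (by simp; ring) (by simp; ring)
  one_mul a := ext' (by simp) (by simp)
  mul_one a := ext' (by simp) (by simp)
  neg_add_cancel a := ext' (by simp) (by simp)
  mul_comm a b := ext' (by simp; ring) (by simp; ring)
  natCast m := (((m : ℕ) : ZMod n), (0 : ZMod n))
  natCast_zero := ext' (by simp) (by simp)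
  natCast_succ m := ext' (by exact Nat.cast_succ m) (by exact (add_zero 0).symm)
  nsmul := nsmulRec
  zsmul := zsmulRec

@[simp] lemma fst_ofNat (m : ℕ) [m.AtLeastTwo] :
    (no_index (OfNat.ofNat m) : FR n).1 = OfNat.ofNat m := Nat.cast_ofNat
@[simp] lemma snd_ofNat (m : ℕ) [m.AtLeastTwo] :
    (no_index (OfNat.ofNat m) : FR n).2 = 0 := rfl
@[simp] lemma fst_sub (x y : FR n) : (x - y).1 = x.1 - y.1 := by
  rw [sub_eq_add_neg, sub_eq_add_neg]; simp
@[simp] lemma snd_sub (x y : FR n) : (x - y).2 = x.2 - y.2 := by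
  rw [sub_eq_add_neg, sub_eq_add_neg]; simp

@[simp] lemma fst_natCast_pow (a m : ℕ) : (((a : FR n)) ^ m).1 = (a : ZMod n) ^ m := by
  rw [← Nat.cast_pow, fst_natCast, Nat.cast_pow]
@[simp] lemma snd_natCast_pow (a m : ℕ) : (((a : FR n)) ^ m).2 = 0 := by
  rw [← Nat.cast_pow, snd_natCast]
@[simp] lemma fst_ofNat_pow (a m : ℕ) [a.AtLeastTwo] :
    ((no_index (OfNat.ofNat a) : FR n) ^ m).1 = (OfNat.ofNat a : ZMod n) ^ m := by
  rw [← Nat.cast_ofNat (R := FR n), fst_natCast_pow, Nat.cast_ofNat]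
@[simp] lemma snd_ofNat_pow (a m : ℕ) [a.AtLeastTwo] :
    ((no_index (OfNat.ofNat a) : FR n) ^ m).2 = 0 := by
  rw [← Nat.cast_ofNat (R := FR n), snd_natCast_pow]

instance [NeZero n] : CharP (FR n) n := ⟨fun m => by
  constructor
  · intro h
    have := congrArg Prod.fst h
    simpa [ZMod.natCast_eq_zero_iff] using this
  · intro h
    exact ext' (by simp [ZMod.natCast_eq_zero_iff, h]) (by simp)⟩

def alpha : FR n := (0, 1)

lemma alpha_pow (m : ℕ) : (alpha : FR n) ^ (m + 1) = ((Nat.fib m : ZMod n), (Nat.fib (m+1) : ZMod n)) := by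
  induction m with
  | zero => exact ext' (by rw [zero_add, pow_one]; simp [alpha]) (by rw [zero_add, pow_one]; simp [alpha])
  | succ k ih =>
      rw [pow_succ, ih]
      refine ext' ((fst_mul _ _).trans ?_) ((snd_mul _ _).trans ?_) <;> simp [alpha, Nat.fib_add_two] <;> push_cast <;> ring

end FR

open FR in
theorem fib_legendre (p : ℕ) [Fact p.Prime] (hodd : Odd p) :
    ((Nat.fib p : ZMod p) = ((legendreSym p 5 : ℤ) : ZMod p)) ∧
    ((2 * Nat.fib (p+1) : ZMod p) = 1 + ((legendreSym p 5 : ℤ) : ZMod p)) := by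
  have hp2 : p % 2 = 1 := Nat.odd_iff.mp hodd
  have hp1 : 1 < p := (Fact.out : p.Prime).one_lt
  obtain ⟨m, hm⟩ : ∃ m, p = 2 * m + 1 := ⟨p / 2, by omega⟩
  set χ : ZMod p := ((legendreSym p 5 : ℤ) : ZMod p) with hχ
  have hχ5 : χ = (5 : ZMod p) ^ m := by
    rw [hχ, legendreSym.eq_pow]
    norm_num
    congr 1
    omega
  set β : FR p := alpha * 2 - 1 with hβ
  have hβ1 : β.1 = -1 := by simp [hβ]; simp [alpha]
  have hβ2' : β.2 = 2 := by simp [hβ]; simp [alpha]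
  have hβsq : β ^ 2 = (5 : FR p) := by
    refine ext' ?_ ?_ <;> simp [pow_two, hβ1, hβ2'] <;> norm_num
  have h1 : β ^ p = (5 : FR p) ^ m * β := by
    have e : β ^ p = β ^ (2 * m + 1) := congrArg (fun t => β ^ t) hm
    rw [e, pow_succ, pow_mul, hβsq]
  have h2pow : (2 : FR p) ^ p = 2 := by
    have h := add_pow_char (1 : FR p) 1 p
    norm_num at h
    exact h
  have hneg : (-1 : FR p) ^ p = -1 := hodd.neg_one_pow
  have h2 : β ^ p = alpha ^ p * 2 - 1 := by
    have hsplit : β = alpha * 2 + (-1) := by rw [hβ]; ring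
    rw [hsplit, add_pow_char, mul_pow, h2pow, hneg, sub_eq_add_neg]
  have hαp : (alpha : FR p) ^ p = ((Nat.fib (p-1) : ZMod p), (Nat.fib p : ZMod p)) := by
    have h := alpha_pow (n := p) (p - 1)
    rw [show p - 1 + 1 = p by omega] at h
    exact h
  have key : alpha ^ p * 2 - 1 = (5 : FR p) ^ m * β := by rw [← h2, h1]
  have keyfst := congrArg Prod.fst key
  have keysnd := congrArg Prod.snd key
  simp [hβ1, hβ2', ← hχ5] at keyfst keysnd
  rw [hαp] at keyfst keysnd
  dsimp only at keyfst keysnd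
  -- keyfst : ↑fib(p-1)*2 - 1 = -χ ; keysnd : ↑fib p * 2 = χ * 2
  have h2ne : (2 : ZMod p) ≠ 0 := by
    intro h
    have h' : ((2:ℕ) : ZMod p) = 0 := by push_cast; exact h
    rw [ZMod.natCast_eq_zero_iff] at h'
    have := Nat.le_of_dvd (by norm_num) h'
    omega
  have hfibp : (Nat.fib p : ZMod p) = χ := keysnd.resolve_right h2ne
  constructor
  · exact hfibp
  · have hfib : Nat.fib (p+1) = Nat.fib p + Nat.fib (p-1) := by
      rw [show p+1 = (p-1)+2 by omega, Nat.fib_add_two, show p-1+1 = p by omega]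
      omega
    rw [hfib]
    push_cast
    linear_combination 2 * hfibp + keyfst

theorem prime_dvd_fib_one (p : ℕ) [Fact p.Prime] (hodd : Odd p)
    (h : legendreSym p 5 = 1) : p ∣ Nat.fib (p - 1) := by
  have hp1 : 1 < p := (Fact.out : p.Prime).one_lt
  obtain ⟨h1, h2⟩ := fib_legendre p hodd
  rw [h] at h1 h2
  have hfib : Nat.fib (p+1) = Nat.fib p + Nat.fib (p-1) := by
    rw [show p+1 = (p-1)+2 by omega, Nat.fib_add_two, show p-1+1 = p by omega]
    omega
  have h2ne : (2 : ZMod p) ≠ 0 := by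
    intro h
    have h' : ((2:ℕ) : ZMod p) = 0 := by push_cast; exact h
    rw [ZMod.natCast_eq_zero_iff] at h'
    have := Nat.le_of_dvd (by norm_num) h'
    have := Nat.odd_iff.mp hodd
    omega
  have : (2 : ZMod p) * (Nat.fib (p-1) : ZMod p) = 2 * 0 := by
    rw [hfib] at h2
    push_cast at h2 h1 ⊢
    linear_combination h2 - 2 * h1
  have := mul_left_cancel₀ h2ne this
  rwa [ZMod.natCast_eq_zero_iff] at this

theorem prime_dvd_fib_neg_one (p : ℕ) [Fact p.Prime] (hodd : Odd p)
    (h : legendreSym p 5 = -1) : p ∣ Nat.fib (p + 1) := by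
  obtain ⟨h1, h2⟩ := fib_legendre p hodd
  rw [h] at h2
  have h2ne : (2 : ZMod p) ≠ 0 := by
    intro h
    have h' : ((2:ℕ) : ZMod p) = 0 := by push_cast; exact h
    rw [ZMod.natCast_eq_zero_iff] at h'
    have := Nat.le_of_dvd (by norm_num) h'
    have := Nat.odd_iff.mp hodd
    have := (Fact.out : p.Prime).one_lt
    omega
  have : (2 : ZMod p) * (Nat.fib (p+1) : ZMod p) = 2 * 0 := by
    push_cast at h2 ⊢
    linear_combination h2
  have := mul_left_cancel₀ h2ne this
  rwa [ZMod.natCast_eq_zero_iff] at this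

theorem jacobi_eq_of_cong (L p : ℕ) (hL : 0 < L) [Fact p.Prime] (hodd : Odd p)
    (hdvd : p ∣ Nat.fib L) (ε : ℤ) (hε : ε = 1 ∨ ε = -1)
    (hcong : (p:ℤ) ≡ ε [ZMOD (L:ℤ)]) : jacobiSym 5 p = ε := by
  have hp := (Fact.out : p.Prime)
  have hp3 : 3 ≤ p := by
    rcases hp.two_le.lt_or_eq with h | h
    · omega
    · exfalso; rw [← h] at hodd; exact (Nat.not_odd_iff_even.mpr (by norm_num)) hodd
  -- L divides p - ε (as naturals, in the appropriate form)
  have hLd : (L : ℤ) ∣ (p : ℤ) - ε := Int.ModEq.dvd hcong.symm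
  have hp5 : p ≠ 5 := by
    intro h5
    subst h5
    have h5L : 5 ∣ L := by
      have hg : Nat.fib (Nat.gcd 5 L) = Nat.gcd (Nat.fib 5) (Nat.fib L) := Nat.fib_gcd 5 L
      have h5g : 5 ∣ Nat.fib (Nat.gcd 5 L) := by
        rw [hg]
        exact Nat.dvd_gcd (by norm_num) hdvd
      have hd : Nat.gcd 5 L ∣ 5 := Nat.gcd_dvd_left 5 L
      rcases Nat.Prime.eq_one_or_self_of_dvd (by norm_num) _ hd with h | h
      · rw [h] at h5g; norm_num at h5g
      · rw [← h]; exact Nat.gcd_dvd_right 5 L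
    have hL5 : 5 ≤ L := Nat.le_of_dvd hL h5L
    rcases hε with rfl | rfl
    · have h4 : (L:ℤ) ∣ 4 := by simpa using hLd
      have h4' : L ∣ 4 := Int.natCast_dvd_natCast.mp (by exact_mod_cast h4)
      have := Nat.le_of_dvd (by norm_num) h4'
      omega
    · have h6 : (L:ℤ) ∣ 6 := by
        have he : ((5:ℕ):ℤ) - (-1) = 6 := by norm_num
        rwa [he] at hLd
      have h6' : L ∣ 6 := Int.natCast_dvd_natCast.mp (by exact_mod_cast h6)
      have hle := Nat.le_of_dvd (by norm_num) h6'
      interval_cases L <;> omega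
  have h5ne : ((5:ℤ) : ZMod p) ≠ 0 := by
    intro h
    have h' : ((5:ℕ) : ZMod p) = 0 := by exact_mod_cast h
    rw [ZMod.natCast_eq_zero_iff] at h'
    exact hp5 ((Nat.prime_dvd_prime_iff_eq hp (by norm_num)).mp h')
  have hlval := legendreSym.eq_one_or_neg_one p (a := 5) h5ne
  have hjac : jacobiSym 5 p = legendreSym p 5 := (jacobiSym.legendreSym.to_jacobiSym p 5).symm
  have main : legendreSym p 5 = ε := by
    by_contra hne
    have key : ∀ N : ℕ, p ∣ Nat.fib N → Nat.gcd L N ∣ 2 → False := by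
      intro N hN hg2
      have hgd : Nat.fib (Nat.gcd L N) = Nat.gcd (Nat.fib L) (Nat.fib N) := Nat.fib_gcd L N
      have hpg : p ∣ Nat.fib (Nat.gcd L N) := by
        rw [hgd]; exact Nat.dvd_gcd hdvd hN
      have hle : Nat.fib (Nat.gcd L N) ≤ 1 := by
        have h1 : Nat.gcd L N ≤ 2 := Nat.le_of_dvd (by norm_num) hg2
        interval_cases h : Nat.gcd L N <;> simp [Nat.fib]
      have hfpos : 0 < Nat.fib (Nat.gcd L N) := by
        have hgpos : 0 < Nat.gcd L N := Nat.gcd_pos_of_pos_left N hL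
        exact Nat.fib_pos.mpr hgpos
      have := Nat.le_of_dvd hfpos hpg
      omega
    rcases hε with rfl | rfl
    · -- L ∣ p - 1 (nat), legendre = -1, p ∣ fib (p+1)
      have hlneg : legendreSym p 5 = -1 := by rcases hlval with h | h; exacts [absurd h hne, h]
      have hN := prime_dvd_fib_neg_one p hodd hlneg
      have hLp : L ∣ p - 1 := by
        have : ((p - 1 : ℕ) : ℤ) = (p : ℤ) - 1 := by
          push_cast [Nat.cast_sub (by omega : 1 ≤ p)]; ring
        exact Int.natCast_dvd_natCast.mp (by rw [this]; exact hLd)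
      refine key (p+1) hN ?_
      have hg1 : Nat.gcd L (p+1) ∣ p - 1 := dvd_trans (Nat.gcd_dvd_left _ _) hLp
      have hg2 : Nat.gcd L (p+1) ∣ p + 1 := Nat.gcd_dvd_right _ _
      have := Nat.dvd_sub hg2 hg1
      rwa [show p + 1 - (p - 1) = 2 by omega] at this
    · have hlpos : legendreSym p 5 = 1 := by rcases hlval with h | h; exacts [h, absurd h hne]
      have hN := prime_dvd_fib_one p hodd hlpos
      have hLp : L ∣ p + 1 := by
        have : ((p + 1 : ℕ) : ℤ) = (p : ℤ) - (-1) := by push_cast; ring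
        exact Int.natCast_dvd_natCast.mp (by rw [this]; exact hLd)
      refine key (p-1) hN ?_
      have hg1 : Nat.gcd L (p-1) ∣ p + 1 := dvd_trans (Nat.gcd_dvd_left _ _) hLp
      have hg2 : Nat.gcd L (p-1) ∣ p - 1 := Nat.gcd_dvd_right _ _
      have := Nat.dvd_sub hg1 hg2
      rwa [show p + 1 - (p - 1) = 2 by omega] at this
  rw [hjac, main]

lemma jacobiSym_prod {ι : Type*} (a : ℤ) (s : Finset ι) (f : ι → ℕ)
    (hf : ∀ i ∈ s, f i ≠ 0) :
    jacobiSym a (∏ i ∈ s, f i) = ∏ i ∈ s, jacobiSym a (f i) := by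
  classical
  induction s using Finset.induction_on with
  | empty => simp
  | @insert x s hx ih =>
      rw [Finset.prod_insert hx, Finset.prod_insert hx,
        jacobiSym.mul_right' a (hf x (Finset.mem_insert_self x s))
          (Finset.prod_ne_zero_iff.mpr (fun i hi => hf i (Finset.mem_insert_of_mem hi))),
        ih (fun i hi => hf i (Finset.mem_insert_of_mem hi))]

/-- **Theorem (main theorem).** Let `L` be a positive integer and `p 0, …, p (k-1)`
(with `k ≥ 2`) distinct odd primes, each dividing the Fibonacci number `F L`, such that
each `p i ≡ ±1 (mod L)`. Then `P = ∏ i, p i` is a Fibonacci pseudoprime: it is odd,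
composite, and `P ∣ F (P - (5/P))`, where `(5/P)` is the Jacobi symbol. -/
theorem product_of_special_fib_factors_is_fibonacci_pseudoprime
    (L k : ℕ) (hL : 0 < L) (hk : 2 ≤ k) (p : Fin k → ℕ)
    (hinj : Function.Injective p)
    (hprime : ∀ i, (p i).Prime) (hodd : ∀ i, Odd (p i))
    (hdvd : ∀ i, p i ∣ Nat.fib L)
    (hcong : ∀ i, (p i : ℤ) ≡ 1 [ZMOD (L : ℤ)] ∨ (p i : ℤ) ≡ -1 [ZMOD (L : ℤ)]) :
    Odd (∏ i, p i) ∧ 1 < ∏ i, p i ∧ ¬ (∏ i, p i).Prime ∧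
      (∏ i, p i) ∣ Nat.fib (((∏ i, p i : ℕ) : ℤ) - jacobiSym 5 (∏ i, p i)).toNat := by
  classical
  have hne : Nonempty (Fin k) := ⟨⟨0, by omega⟩⟩
  have hPodd : Odd (∏ i, p i) :=
    Finset.prod_induction p Odd (fun a b => Odd.mul) odd_one (fun i _ => hodd i)
  have h1lt : 1 < ∏ i, p i := by
    have hpos : 0 < ∏ i, p i :=
      Finset.prod_pos (fun i _ => (hprime i).pos)
    have hle : p ⟨0, by omega⟩ ≤ ∏ i, p i :=
      Nat.le_of_dvd hpos (Finset.dvd_prod_of_mem p (Finset.mem_univ _))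
    have := (hprime ⟨0, by omega⟩).two_le
    omega
  have hnotprime : ¬ (∏ i, p i).Prime := by
    intro hP
    have i0 : Fin k := ⟨0, by omega⟩
    have i1 : Fin k := ⟨1, by omega⟩
    have e0 : p ⟨0, by omega⟩ = ∏ i, p i :=
      (Nat.prime_dvd_prime_iff_eq (hprime _) hP).mp
        (Finset.dvd_prod_of_mem p (Finset.mem_univ _))
    have e1 : p ⟨1, by omega⟩ = ∏ i, p i :=
      (Nat.prime_dvd_prime_iff_eq (hprime _) hP).mp
        (Finset.dvd_prod_of_mem p (Finset.mem_univ _))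
    have := hinj (e0.trans e1.symm)
    simp [Fin.ext_iff] at this
  -- per-prime jacobi facts
  have hJ : ∀ i, (jacobiSym 5 (p i) = 1 ∨ jacobiSym 5 (p i) = -1) ∧
      (p i : ℤ) ≡ jacobiSym 5 (p i) [ZMOD (L : ℤ)] := by
    intro i
    haveI : Fact (p i).Prime := ⟨hprime i⟩
    rcases hcong i with h | h
    · have he := jacobi_eq_of_cong L (p i) hL (hodd i) (hdvd i) 1 (Or.inl rfl) h
      rw [he]; exact ⟨Or.inl rfl, h⟩
    · have he := jacobi_eq_of_cong L (p i) hL (hodd i) (hdvd i) (-1) (Or.inr rfl) h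
      rw [he]; exact ⟨Or.inr rfl, h⟩
  have hprodJ : jacobiSym 5 (∏ i, p i) = ∏ i, jacobiSym 5 (p i) :=
    jacobiSym_prod 5 Finset.univ p (fun i _ => (hprime i).ne_zero)
  set J : ℤ := jacobiSym 5 (∏ i, p i) with hJdef
  have hJpm : J = 1 ∨ J = -1 := by
    rw [hprodJ]
    exact Finset.prod_induction _ (fun x : ℤ => x = 1 ∨ x = -1)
      (fun a b ha hb => by rcases ha with rfl | rfl <;> rcases hb with rfl | rfl <;> norm_num)
      (Or.inl rfl) (fun i _ => (hJ i).1)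
  have hcast : ((∏ i, p i : ℕ) : ℤ) ≡ J [ZMOD (L : ℤ)] := by
    rw [← ZMod.intCast_eq_intCast_iff, hprodJ]
    push_cast
    refine Finset.prod_congr rfl (fun i _ => ?_)
    have := (ZMod.intCast_eq_intCast_iff _ _ L).mpr (hJ i).2
    push_cast at this
    exact this
  have hdvdLJ : (L : ℤ) ∣ ((∏ i, p i : ℕ) : ℤ) - J := Int.ModEq.dvd hcast.symm
  have hJle : -1 ≤ J ∧ J ≤ 1 := by rcases hJpm with h | h <;> rw [h] <;> norm_num
  have hpos : 0 ≤ ((∏ i, p i : ℕ) : ℤ) - J := by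
    have : (2 : ℤ) ≤ ((∏ i, p i : ℕ) : ℤ) := by exact_mod_cast h1lt
    omega
  set M : ℕ := (((∏ i, p i : ℕ) : ℤ) - J).toNat with hMdef
  have hM : (M : ℤ) = ((∏ i, p i : ℕ) : ℤ) - J := Int.toNat_of_nonneg hpos
  have hLM : L ∣ M := by
    have : (L : ℤ) ∣ (M : ℤ) := by rw [hM]; exact hdvdLJ
    exact_mod_cast this
  have hfib : ∀ i, p i ∣ Nat.fib M := fun i => (hdvd i).trans (Nat.fib_dvd L M hLM)
  refine ⟨hPodd, h1lt, hnotprime, ?_⟩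
  have himg : ∏ q ∈ Finset.univ.image p, q = ∏ i, p i :=
    Finset.prod_image (fun i _ j _ h => hinj h)
  rw [← himg]
  refine Finset.prod_primes_dvd _ (fun q hq => ?_) (fun q hq => ?_)
  · obtain ⟨i, _, rfl⟩ := Finset.mem_image.mp hq
    exact (hprime i).prime
  · obtain ⟨i, _, rfl⟩ := Finset.mem_image.mp hq
    exact hfib i
end

section
/- Let p be an odd prime and L a positive integer such that p divides the Fibonacci number F_L. If p ≡ 1 (mod L) or p ≡ -1 (mod L), then p ≡ (5/p) (mod L), where (5/p) denotes the Legendre symbol. -/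
open Polynomial

lemma fib_entry_point (p : ℕ) [hp : Fact p.Prime] (hodd : Odd p) (hp5 : p ≠ 5) :
    (p ∣ Nat.fib (p - 1) ∧ legendreSym p 5 = 1) ∨
    (p ∣ Nat.fib (p + 1) ∧ legendreSym p 5 = -1) := by
  have hp2 : p ≠ 2 := by rintro rfl; exact (Nat.not_odd_iff_even.mpr (by decide)) hodd
  set f : (ZMod p)[X] := X ^ 2 - C 5 with hf
  have hdeg : f.degree = 2 := by
    have := Polynomial.degree_X_pow_sub_C (R := ZMod p) (n := 2) (by norm_num) 5
    rw [hf]; exact_mod_cast this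
  have hinj : Function.Injective (AdjoinRoot.of f) :=
    AdjoinRoot.of.injective_of_degree_ne_zero (by rw [hdeg]; decide)
  haveI : CharP (AdjoinRoot f) p := charP_of_injective_ringHom hinj p
  set R := AdjoinRoot f with hR
  set s : R := AdjoinRoot.root f with hsdef
  have hs : s ^ 2 = (5 : R) := by
    have h0 : AdjoinRoot.mk f f = 0 := AdjoinRoot.mk_self
    rw [hf, map_sub, map_pow, AdjoinRoot.mk_X, AdjoinRoot.mk_C, sub_eq_zero] at h0
    rw [hsdef, h0]; simp [map_ofNat]
  have h2 : (2 : ZMod p) ≠ 0 := by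
    intro h
    have h' : ((2:ℕ) : ZMod p) = 0 := by exact_mod_cast h
    rw [ZMod.natCast_eq_zero_iff] at h'
    exact hp2 ((Nat.prime_dvd_prime_iff_eq hp.out Nat.prime_two).mp h')
  have h5 : (5 : ZMod p) ≠ 0 := by
    intro h
    have h' : ((5:ℕ) : ZMod p) = 0 := by exact_mod_cast h
    rw [ZMod.natCast_eq_zero_iff] at h'
    exact hp5 ((Nat.prime_dvd_prime_iff_eq hp.out (by norm_num)).mp h')
  set c : R := AdjoinRoot.of f (2⁻¹ : ZMod p) with hc
  have h2c : 2 * c = 1 := by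
    have e : ((2 : ZMod p) * 2⁻¹) = 1 := mul_inv_cancel₀ h2
    calc 2 * c = AdjoinRoot.of f ((2 : ZMod p) * 2⁻¹) := by
          rw [map_mul, ← hc, map_ofNat]
      _ = 1 := by rw [e, map_one]
  set φ : R := c * (1 + s) with hφ
  set ψ : R := c * (1 - s) with hψ
  have hmul : φ * ψ = -1 := by
    rw [hφ, hψ]; linear_combination (-(c^2)) * hs - (2*c+1) * h2c
  have hsub : φ - ψ = s := by
    rw [hφ, hψ]; linear_combination s * h2c
  have hφ2 : φ ^ 2 = φ + 1 := by
    rw [hφ]; linear_combination c^2 * hs + (3*c + c*s + 1) * h2c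
  have hψ2 : ψ ^ 2 = ψ + 1 := by
    rw [hψ]; linear_combination c^2 * hs + (3*c - c*s + 1) * h2c
  -- Binet
  have binet : ∀ n : ℕ, φ ^ n - ψ ^ n = (Nat.fib n : R) * s := by
    have key : ∀ n : ℕ, (φ ^ n - ψ ^ n = (Nat.fib n : R) * s) ∧
        (φ ^ (n+1) - ψ ^ (n+1) = (Nat.fib (n+1) : R) * s) := by
      intro n
      induction n with
      | zero => refine ⟨by simp, by simpa using hsub⟩
      | succ k ih =>
        refine ⟨ih.2, ?_⟩
        have e1 : φ ^ (k+2) = φ ^ (k+1) + φ ^ k := by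
          calc φ ^ (k+2) = φ ^ k * φ ^ 2 := by ring
            _ = φ ^ k * (φ + 1) := by rw [hφ2]
            _ = φ ^ (k+1) + φ ^ k := by ring
        have e2 : ψ ^ (k+2) = ψ ^ (k+1) + ψ ^ k := by
          calc ψ ^ (k+2) = ψ ^ k * ψ ^ 2 := by ring
            _ = ψ ^ k * (ψ + 1) := by rw [hψ2]
            _ = ψ ^ (k+1) + ψ ^ k := by ring
        rw [e1, e2, Nat.fib_add_two]
        push_cast
        linear_combination ih.1 + ih.2
    exact fun n => (key n).1
  -- Frobenius
  obtain ⟨k, hk⟩ := hodd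
  have hk2 : p / 2 = k := by omega
  have hcp : c ^ p = c := by rw [hc, ← map_pow, ZMod.pow_card]
  set χ : ZMod p := (5 : ZMod p) ^ (p / 2) with hχdef
  have hsp : s ^ p = AdjoinRoot.of f χ * s := by
    have e0 : s ^ p = s ^ (2 * k + 1) := congrArg (fun n => s ^ n) hk
    have : s ^ p = (s ^ 2) ^ k * s := by rw [e0, pow_succ, pow_mul]
    rw [this, hs, hχdef, hk2, map_pow, map_ofNat]
  have hφp : φ ^ p = c * (1 + AdjoinRoot.of f χ * s) := by
    calc φ ^ p = c ^ p * (1 + s) ^ p := by rw [hφ, mul_pow]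
      _ = c ^ p * (1 ^ p + s ^ p) := by rw [add_pow_char]
      _ = c * (1 + AdjoinRoot.of f χ * s) := by rw [hcp, hsp, one_pow]
  have hψp : ψ ^ p = c * (1 - AdjoinRoot.of f χ * s) := by
    have e : (1 : R) - s = 1 + (-s) := by ring
    calc ψ ^ p = c ^ p * (1 - s) ^ p := by rw [hψ, mul_pow]
      _ = c ^ p * (1 ^ p + (-s) ^ p) := by rw [e, add_pow_char]
      _ = c ^ p * (1 - s ^ p) := by
          rw [Odd.neg_pow ⟨k, by omega⟩, one_pow]; ring
      _ = c * (1 - AdjoinRoot.of f χ * s) := by rw [hcp, hsp]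
  have hχleg : ((legendreSym p 5 : ℤ) : ZMod p) = χ := by
    have := legendreSym.eq_pow p (5 : ℤ)
    rw [this, hχdef]; norm_num
  -- extraction helper
  have extract : ∀ n : ℕ, (n : R) * s = 0 → p ∣ n := by
    intro n hn
    have h1 : (n : R) * (5 : R) = 0 := by
      have : ((n : R) * s) * s = 0 := by rw [hn, zero_mul]
      calc (n : R) * (5:R) = ((n : R) * s) * s := by rw [mul_assoc, ← pow_two, hs]
        _ = 0 := this
    have h2' : ((n * 5 : ℕ) : R) = 0 := by rw [Nat.cast_mul]; exact_mod_cast h1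
    have h3 : p ∣ n * 5 := (CharP.cast_eq_zero_iff R p _).mp h2'
    rcases (Nat.Prime.dvd_mul hp.out).mp h3 with h | h
    · exact h
    · exact absurd ((Nat.prime_dvd_prime_iff_eq hp.out (by norm_num)).mp h) hp5
  rcases legendreSym.eq_one_or_neg_one p (a := 5) (by exact_mod_cast h5) with hl | hl
  · left
    refine ⟨?_, hl⟩
    have hχ1 : AdjoinRoot.of f χ = 1 := by
      rw [← hχleg, hl]; norm_num
    have hφp' : φ ^ p = φ := by rw [hφp, hχ1, one_mul, ← hφ]
    have hψp' : ψ ^ p = ψ := by rw [hψp, hχ1, one_mul, ← hψ]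
    have huφ : φ * (-ψ) = 1 := by rw [mul_neg, hmul]; ring
    have huψ : ψ * (-φ) = 1 := by rw [mul_neg, mul_comm, hmul]; ring
    have hpm : p - 1 + 1 = p := by omega
    have hφ1 : φ ^ (p - 1) = 1 := by
      have e : φ ^ (p-1) * φ = φ := by rw [← pow_succ, hpm, hφp']
      calc φ ^ (p-1) = φ ^ (p-1) * (φ * (-ψ)) := by rw [huφ, mul_one]
        _ = (φ ^ (p-1) * φ) * (-ψ) := by ring
        _ = φ * (-ψ) := by rw [e]
        _ = 1 := huφ
    have hψ1 : ψ ^ (p - 1) = 1 := by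
      have e : ψ ^ (p-1) * ψ = ψ := by rw [← pow_succ, hpm, hψp']
      calc ψ ^ (p-1) = ψ ^ (p-1) * (ψ * (-φ)) := by rw [huψ, mul_one]
        _ = (ψ ^ (p-1) * ψ) * (-φ) := by ring
        _ = ψ * (-φ) := by rw [e]
        _ = 1 := huψ
    have : (Nat.fib (p-1) : R) * s = 0 := by
      rw [← binet, hφ1, hψ1, sub_self]
    exact extract _ this
  · right
    refine ⟨?_, hl⟩
    have hχ1 : AdjoinRoot.of f χ = -1 := by
      rw [← hχleg, hl]; norm_num
    have hφp' : φ ^ p = ψ := by rw [hφp, hχ1, hψ]; ring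
    have hψp' : ψ ^ p = φ := by rw [hψp, hχ1, hφ]; ring
    have hφ1 : φ ^ (p + 1) = -1 := by
      rw [pow_succ, hφp', mul_comm, hmul]
    have hψ1 : ψ ^ (p + 1) = -1 := by
      rw [pow_succ, hψp', hmul]
    have : (Nat.fib (p+1) : R) * s = 0 := by
      rw [← binet, hφ1, hψ1, sub_self]
    exact extract _ this

/-- Let `p` be an odd prime and `L` a positive integer with `p ∣ F L`.
If `p ≡ ±1 (mod L)`, then `p ≡ (5/p) (mod L)`, where `(5/p)` is the Legendre symbol. -/
theorem odd_prime_factor_of_fib_congruent_legendre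
    (p : ℕ) [Fact p.Prime] (hodd : Odd p) (L : ℕ) (hL : 0 < L)
    (hdvd : p ∣ Nat.fib L)
    (hcong : (p : ℤ) ≡ 1 [ZMOD (L : ℤ)] ∨ (p : ℤ) ≡ -1 [ZMOD (L : ℤ)]) :
    (p : ℤ) ≡ legendreSym p 5 [ZMOD (L : ℤ)] := by
  have hp := (Fact.out : p.Prime)
  by_cases hp5 : p = 5
  · subst hp5
    exfalso
    have h5L : 5 ∣ L := by
      have hg : Nat.fib (Nat.gcd 5 L) = Nat.gcd (Nat.fib 5) (Nat.fib L) := Nat.fib_gcd 5 L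
      have h55 : Nat.fib 5 = 5 := by decide
      rw [h55, Nat.gcd_eq_left hdvd] at hg
      have hd : Nat.gcd 5 L ∣ 5 := Nat.gcd_dvd_left 5 L
      rcases (Nat.Prime.eq_one_or_self_of_dvd (by norm_num) _ hd) with h | h
      · rw [h] at hg; simp at hg
      · rw [← h]; exact Nat.gcd_dvd_right 5 L
    rcases hcong with h | h
    · have h4 : (L : ℤ) ∣ 4 := by
        have h' := h.dvd
        have h'' : (L : ℤ) ∣ -4 := by convert h' using 1; norm_num
        exact dvd_neg.mp h''
      have : (L : ℕ) ∣ 4 := by exact_mod_cast h4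
      have : (5 : ℕ) ∣ 4 := dvd_trans h5L this
      norm_num at this
    · have h6 : (L : ℤ) ∣ 6 := by
        have h' := h.dvd
        have h'' : (L : ℤ) ∣ -6 := by convert h' using 1; norm_num
        exact dvd_neg.mp h''
      have : (L : ℕ) ∣ 6 := by exact_mod_cast h6
      have : (5 : ℕ) ∣ 6 := dvd_trans h5L this
      norm_num at this
  · have hsmall : ∀ d : ℕ, 0 < d → d ∣ 2 → p ∣ Nat.fib d → False := by
      intro d hd0 hd2 hpd
      have hle : d ≤ 2 := Nat.le_of_dvd (by norm_num) hd2
      have hfib1 : Nat.fib d = 1 := by interval_cases d <;> rfl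
      rw [hfib1] at hpd
      have h1 := Nat.dvd_one.mp hpd
      have h2 := hp.one_lt
      omega
    rcases fib_entry_point p hodd hp5 with ⟨hdvd', hleg⟩ | ⟨hdvd', hleg⟩
    · rw [hleg]
      -- push_cast
      rcases hcong with h | h
      · exact h
      · exfalso
        set d := Nat.gcd L (p - 1) with hd
        have hpfd : p ∣ Nat.fib d := by
          rw [hd, Nat.fib_gcd]
          exact Nat.dvd_gcd hdvd hdvd'
        have hd0 : 0 < d := Nat.gcd_pos_of_pos_left _ hL
        have hdL : (d : ℤ) ∣ (p : ℤ) + 1 := by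
          have h1 : (L : ℤ) ∣ (p : ℤ) + 1 := by
            have h' := h.dvd
            rw [show (-1:ℤ) - (p:ℤ) = -((p:ℤ)+1) from by ring, dvd_neg] at h'
            exact h'
          exact dvd_trans (Int.natCast_dvd_natCast.mpr (Nat.gcd_dvd_left _ _)) h1
        have hdm : (d : ℤ) ∣ (p : ℤ) - 1 := by
          have h1 : d ∣ p - 1 := Nat.gcd_dvd_right _ _
          have h2 : ((p - 1 : ℕ) : ℤ) = (p : ℤ) - 1 := by
            have : 1 ≤ p := hp.one_lt.le
            omega
          rw [← h2]
          exact_mod_cast h1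
        have hd2 : (d : ℤ) ∣ 2 := by
          have := dvd_sub hdL hdm
          rw [show (2:ℤ) = ((p:ℤ)+1) - ((p:ℤ)-1) by ring]; exact this
        exact hsmall d hd0 (by exact_mod_cast hd2) hpfd
    · rw [hleg]
      -- push_cast
      rcases hcong with h | h
      · exfalso
        set d := Nat.gcd L (p + 1) with hd
        have hpfd : p ∣ Nat.fib d := by
          rw [hd, Nat.fib_gcd]
          exact Nat.dvd_gcd hdvd hdvd'
        have hd0 : 0 < d := Nat.gcd_pos_of_pos_left _ hL
        have hdL : (d : ℤ) ∣ (p : ℤ) - 1 := by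
          have h1 : (L : ℤ) ∣ (p : ℤ) - 1 := by
            have h' := h.dvd
            rw [show (1:ℤ) - (p:ℤ) = -((p:ℤ)-1) from by ring, dvd_neg] at h'
            exact h'
          exact dvd_trans (Int.natCast_dvd_natCast.mpr (Nat.gcd_dvd_left _ _)) h1
        have hdm : (d : ℤ) ∣ (p : ℤ) + 1 := by
          have h1 : d ∣ p + 1 := Nat.gcd_dvd_right _ _
          exact_mod_cast h1
        have hd2 : (d : ℤ) ∣ 2 := by
          have := dvd_sub hdm hdL
          rw [show (2:ℤ) = ((p:ℤ)+1) - ((p:ℤ)-1) by ring]; exact this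
        exact hsmall d hd0 (by exact_mod_cast hd2) hpfd
      · exact h
end

section
/- Let p be an odd prime with p ≡ 1 (mod 5) or p ≡ -1 (mod 5), and let L be a positive integer such that p divides the Fibonacci number F_L. If p ≡ 1 (mod L) or p ≡ -1 (mod L), then in fact p ≡ 1 (mod L). -/
open Nat

lemma binet_aux (p : ℕ) [Fact p.Prime] (r : ZMod p) (hr : r * r = 5) (n : ℕ) :
    (1 + r) ^ n - (1 - r) ^ n = 2 ^ n * r * (Nat.fib n : ZMod p) := by
  induction n using Nat.strong_induction_on with
  | _ n ih =>
    match n with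
    | 0 => simp
    | 1 => simp; ring
    | (m+2) =>
      have h1 := ih (m+1) (by omega)
      have h2 := ih m (by omega)
      have k1 : (1 + r) ^ (m+2) = 2 * (1+r)^(m+1) + 4 * (1+r)^m := by
        have e : (1+r)^(m+2) = (1+r)^m * ((1+r)*(1+r)) := by ring
        have e2 : (1+r)*(1+r) = 2*(1+r) + 4 := by linear_combination hr
        rw [e, e2]; ring
      have k2 : (1 - r) ^ (m+2) = 2 * (1-r)^(m+1) + 4 * (1-r)^m := by
        have e : (1-r)^(m+2) = (1-r)^m * ((1-r)*(1-r)) := by ring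
        have e2 : (1-r)*(1-r) = 2*(1-r) + 4 := by linear_combination hr
        rw [e, e2]; ring
      rw [k1, k2, Nat.fib_add_two]
      push_cast
      linear_combination 2 * h1 + 4 * h2

lemma prime_dvd_fib_pred (p : ℕ) (hp : p.Prime) (hodd : Odd p) (hp5 : p ≠ 5)
    (hsq : IsSquare (5 : ZMod p)) : p ∣ Nat.fib (p - 1) := by
  haveI : Fact p.Prime := ⟨hp⟩
  obtain ⟨r, hr⟩ := hsq
  have hr' : r * r = 5 := hr.symm
  have hp2 : p ≠ 2 := by rintro rfl; exact (Nat.not_odd_iff_even.mpr (by decide)) hodd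
  have h2 : (2 : ZMod p) ≠ 0 := by
    intro h
    have : ((2:ℕ) : ZMod p) = 0 := by exact_mod_cast h
    exact hp2 ((Nat.prime_dvd_prime_iff_eq hp Nat.prime_two).mp
      ((ZMod.natCast_eq_zero_iff 2 p).mp this)).symm.symm
  have h5 : (5 : ZMod p) ≠ 0 := by
    intro h
    have : ((5:ℕ) : ZMod p) = 0 := by exact_mod_cast h
    exact hp5 ((Nat.prime_dvd_prime_iff_eq hp (by norm_num)).mp
      ((ZMod.natCast_eq_zero_iff 5 p).mp this))
  have hrne : r ≠ 0 := by intro h; apply h5; rw [← hr', h, mul_zero]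
  have h4 : (4 : ZMod p) ≠ 0 := by
    intro h; apply h2
    have : (2 : ZMod p) * 2 = 0 := by linear_combination h
    rcases mul_eq_zero.mp this with h' | h' <;> exact h'
  have hab : (1 + r) * (1 - r) = -4 := by linear_combination -hr'
  have ha : (1 + r) ≠ 0 := by
    intro h; apply h4; rw [h, zero_mul] at hab; linear_combination hab
  have hb : (1 - r) ≠ 0 := by
    intro h; apply h4; rw [h, mul_zero] at hab; linear_combination hab
  have key := binet_aux p r hr' (p - 1)
  rw [ZMod.pow_card_sub_one_eq_one ha, ZMod.pow_card_sub_one_eq_one hb, sub_self] at key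
  have h2n : (2 : ZMod p) ^ (p-1) ≠ 0 := pow_ne_zero _ h2
  have : (Nat.fib (p-1) : ZMod p) = 0 := by
    rcases mul_eq_zero.mp key.symm with h | h
    · rcases mul_eq_zero.mp h with h' | h'
      · exact absurd h' h2n
      · exact absurd h' hrne
    · exact h
  exact (ZMod.natCast_eq_zero_iff _ p).mp this

/-- Let `p` be an odd prime with `p ≡ ±1 (mod 5)` and `L` a positive integer with
`p ∣ F L`. If `p ≡ ±1 (mod L)`, then in fact `p ≡ 1 (mod L)`. -/
theorem odd_prime_factor_pm_one_mod_five_is_one_mod_L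
    (p : ℕ) (hp : p.Prime) (hodd : Odd p)
    (h5 : (p : ℤ) ≡ 1 [ZMOD 5] ∨ (p : ℤ) ≡ -1 [ZMOD 5])
    (L : ℕ) (hL : 0 < L) (hdvd : p ∣ Nat.fib L)
    (hcong : (p : ℤ) ≡ 1 [ZMOD (L : ℤ)] ∨ (p : ℤ) ≡ -1 [ZMOD (L : ℤ)]) :
    (p : ℤ) ≡ 1 [ZMOD (L : ℤ)] := by
  rcases hcong with h | h
  · exact h
  · exfalso
    haveI : Fact p.Prime := ⟨hp⟩
    haveI : Fact (Nat.Prime 5) := ⟨by norm_num⟩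
    have hp2 : p ≠ 2 := by rintro rfl; exact (Nat.not_odd_iff_even.mpr (by decide)) hodd
    have hp5 : p ≠ 5 := by
      rintro rfl
      rcases h5 with h' | h' <;> simpa [Int.ModEq] using h'
    -- 5 is a square mod p
    have hsq : IsSquare (5 : ZMod p) := by
      have hiff := (ZMod.exists_sq_eq_prime_iff_of_mod_four_eq_one (p := 5) (q := p)
        (by norm_num) hp2).mp
      have hps : IsSquare ((p : ℕ) : ZMod 5) := by
        rcases h5 with h' | h'
        · have : ((p : ℤ) : ZMod 5) = ((1 : ℤ) : ZMod 5) :=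
            (ZMod.intCast_eq_intCast_iff (p:ℤ) 1 5).mpr h'
          have hc : ((p : ℕ) : ZMod 5) = 1 := by push_cast at this ⊢; simpa using this
          have h1 : IsSquare (1 : ZMod 5) := ⟨1, (one_mul 1).symm⟩
          rw [hc]; exact h1
        · have : ((p : ℤ) : ZMod 5) = ((-1 : ℤ) : ZMod 5) :=
            (ZMod.intCast_eq_intCast_iff (p:ℤ) (-1) 5).mpr h'
          have hc : ((p : ℕ) : ZMod 5) = -1 := by push_cast at this ⊢; simpa using this
          have h1 : IsSquare (-1 : ZMod 5) := ⟨2, by rfl⟩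
          rw [hc]; exact h1
      have := hiff hps
      exact_mod_cast this
    have hfib := prime_dvd_fib_pred p hp hodd hp5 hsq
    -- from p ≡ -1 mod L : L ∣ p + 1
    have hLdvd : L ∣ p + 1 := by
      have : (L : ℤ) ∣ (-1 : ℤ) - p := Int.ModEq.dvd h
      have : (L : ℤ) ∣ (p : ℤ) + 1 := by
        have := dvd_neg.mpr this; simpa [neg_sub] using this
      exact_mod_cast this
    -- gcd L (p-1) divides 2
    set d := Nat.gcd L (p - 1) with hd
    have hdL : d ∣ L := Nat.gcd_dvd_left _ _
    have hd2 : d ∣ 2 := by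
      have h1 : d ∣ p + 1 := hdL.trans hLdvd
      have h2 : d ∣ p - 1 := Nat.gcd_dvd_right _ _
      have hp1 : 1 ≤ p := hp.one_lt.le
      have : d ∣ (p + 1) - (p - 1) := Nat.dvd_sub h1 h2
      have e : (p + 1) - (p - 1) = 2 := by omega
      rwa [e] at this
    have hdpos : 0 < d := Nat.gcd_pos_of_pos_left _ hL
    have hfd : Nat.fib d = 1 := by
      rcases (Nat.dvd_prime Nat.prime_two).mp hd2 with h' | h' <;> rw [h'] <;> rfl
    have : p ∣ Nat.fib d := by
      rw [hd, Nat.fib_gcd]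
      exact Nat.dvd_gcd hdvd hfib
    rw [hfd] at this
    exact hp.one_lt.ne' (Nat.dvd_one.mp this)
end

section
/- Let L be a positive integer and let p be an odd prime dividing the Fibonacci number F_L with p ≡ -1 (mod L). Then p ≢ ±1 (mod 5); that is, p ≡ 2 (mod 5) or p ≡ -2 (mod 5) (and p ≠ 5). -/
private lemma binet_aux_s12 {R : Type*} [CommRing R] (α : R) (h : α ^ 2 = α + 1) :
    ∀ n, (Nat.fib n : R) * (2 * α - 1) = α ^ n - (1 - α) ^ n := by
  intro n
  induction n using Nat.twoStepInduction with
  | zero => simp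
  | one => simp; ring
  | more n ih1 ih2 =>
    have hβ : (1 - α) ^ 2 = (1 - α) + 1 := by linear_combination h
    have e1 : α ^ (n + 2) = α ^ (n + 1) + α ^ n := by
      have h2 : α ^ (n + 2) = α ^ n * α ^ 2 := by ring
      rw [h2, h]; ring
    have e2 : (1 - α) ^ (n + 2) = (1 - α) ^ (n + 1) + (1 - α) ^ n := by
      have h2 : (1 - α) ^ (n + 2) = (1 - α) ^ n * (1 - α) ^ 2 := by ring
      rw [h2, hβ]; ring
    rw [Nat.fib_add_two]
    push_cast
    rw [e1, e2]
    linear_combination ih1 + ih2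

private lemma prime_dvd_fib_sub_one (p : ℕ) (hp : p.Prime) (hodd : Odd p)
    (h5 : p % 5 = 1 ∨ p % 5 = 4) : p ∣ Nat.fib (p - 1) := by
  haveI : Fact p.Prime := ⟨hp⟩
  haveI : Fact (Nat.Prime 5) := ⟨by norm_num⟩
  have hp2 : p ≠ 2 := by rintro rfl; simp [Nat.odd_iff] at hodd
  have hp5 : p ≠ 5 := by rintro rfl; omega
  have hsq : IsSquare ((5 : ℕ) : ZMod p) := by
    rw [← ZMod.exists_sq_eq_prime_iff_of_mod_four_eq_one (by norm_num) hp2]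
    have hc : ((p : ℕ) : ZMod 5) = ((p % 5 : ℕ) : ZMod 5) := (ZMod.natCast_mod p 5).symm
    rcases h5 with h | h <;> rw [hc, h]
    · exact ⟨1, by norm_num⟩
    · exact ⟨2, by norm_num⟩
  obtain ⟨b, hb⟩ := hsq
  have h2ne : (2 : ZMod p) ≠ 0 := by
    intro h
    have h' : ((2 : ℕ) : ZMod p) = 0 := by push_cast; exact h
    rw [ZMod.natCast_eq_zero_iff] at h'
    exact hp2 ((Nat.prime_dvd_prime_iff_eq hp Nat.prime_two).mp h')
  set α : ZMod p := (1 + b) * (2 : ZMod p)⁻¹ with hα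
  have h2inv : (2 : ZMod p) * (2 : ZMod p)⁻¹ = 1 := ZMod.mul_inv_of_unit 2 (IsUnit.mk0 _ h2ne)
  have hb5 : b * b = 5 := by rw [← hb]; push_cast; ring
  have hαsq : α ^ 2 = α + 1 := by
    rw [hα]
    linear_combination (2 : ZMod p)⁻¹ ^ 2 * hb5 + ((3 + b) * (2 : ZMod p)⁻¹ + 1) * h2inv
  have h5ne : (5 : ZMod p) ≠ 0 := by
    intro h
    have h' : ((5 : ℕ) : ZMod p) = 0 := by push_cast; exact h
    rw [ZMod.natCast_eq_zero_iff] at h'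
    exact hp5 ((Nat.prime_dvd_prime_iff_eq hp (by norm_num)).mp h')
  have hαne : α ≠ 0 := by
    intro h
    rw [h] at hαsq
    simp at hαsq
  have hβne : (1 - α) ≠ 0 := by
    intro h
    have : (1 - α) ^ 2 = (1 - α) + 1 := by linear_combination hαsq
    rw [h] at this
    simp at this
  have hfermatα : α ^ (p - 1) = 1 := ZMod.pow_card_sub_one_eq_one hαne
  have hfermatβ : (1 - α) ^ (p - 1) = 1 := ZMod.pow_card_sub_one_eq_one hβne
  have hbin := binet_aux_s12 α hαsq (p - 1)
  rw [hfermatα, hfermatβ, sub_self] at hbin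
  have h2αne : (2 * α - 1) ≠ 0 := by
    intro h
    have hsq5 : (2 * α - 1) ^ 2 = 5 := by linear_combination 4 * hαsq
    rw [h] at hsq5
    exact h5ne (by linear_combination -hsq5)
  have : ((Nat.fib (p - 1) : ℕ) : ZMod p) = 0 := by
    rcases mul_eq_zero.mp hbin with h | h
    · exact h
    · exact absurd h h2αne
  exact (ZMod.natCast_eq_zero_iff _ _).mp this

/-- Let `p` be an odd prime dividing `F L` (with `L` positive) such that `p ≡ -1 (mod L)`.
Then `p ≢ ±1 (mod 5)`; that is, `p ≡ ±2 (mod 5)` (and `p ≠ 5`). -/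
theorem odd_prime_factor_neg_one_mod_L_is_pm_two_mod_five
    (p : ℕ) (hp : p.Prime) (hodd : Odd p)
    (L : ℕ) (hL : 0 < L) (hdvd : p ∣ Nat.fib L)
    (hcong : (p : ℤ) ≡ -1 [ZMOD (L : ℤ)]) :
    ¬ ((p : ℤ) ≡ 1 [ZMOD 5] ∨ (p : ℤ) ≡ -1 [ZMOD 5]) ∧
      ((p : ℤ) ≡ 2 [ZMOD 5] ∨ (p : ℤ) ≡ -2 [ZMOD 5]) ∧ p ≠ 5 := by
  have hp2 : p ≠ 2 := by rintro rfl; simp [Nat.odd_iff] at hodd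
  have hp3 : 3 ≤ p := by
    have := hp.two_le
    rcases Nat.lt_or_ge p 3 with h | h
    · interval_cases p <;> simp_all
    · exact h
  -- L ∣ p + 1
  have hLdvd : L ∣ p + 1 := by
    have h1 : (L : ℤ) ∣ (-1 : ℤ) - (p : ℤ) := hcong.dvd
    have h2 : (L : ℤ) ∣ ((p + 1 : ℕ) : ℤ) := by
      have := h1.neg_right
      push_cast
      convert this using 1
      rfl
      ring
    exact_mod_cast h2
  have hdvd2 : p ∣ Nat.fib (p + 1) := hdvd.trans (Nat.fib_dvd L (p + 1) hLdvd)
  -- p ≠ 5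
  have hp5 : p ≠ 5 := by
    rintro rfl
    have h6 : L ∣ 6 := hLdvd
    have : (5 : ℕ) ∣ Nat.fib 6 := hdvd.trans (Nat.fib_dvd L 6 h6)
    norm_num [Nat.fib] at this
  -- p % 5 ≠ 0
  have hmod0 : p % 5 ≠ 0 := by
    intro h
    have h5d : (5 : ℕ) ∣ p := Nat.dvd_of_mod_eq_zero h
    exact hp5 ((Nat.prime_dvd_prime_iff_eq (by norm_num) hp).mp h5d).symm
  -- p % 5 ∉ {1, 4}
  have hmod14 : ¬ (p % 5 = 1 ∨ p % 5 = 4) := by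
    intro h
    have hfib1 : p ∣ Nat.fib (p - 1) := prime_dvd_fib_sub_one p hp hodd h
    have hgcd : Nat.gcd (p + 1) (p - 1) = 2 := by
      apply Nat.dvd_antisymm
      · have hd : Nat.gcd (p + 1) (p - 1) ∣ (p + 1) - (p - 1) :=
          Nat.dvd_sub (Nat.gcd_dvd_left _ _) (Nat.gcd_dvd_right _ _)
        have : (p + 1) - (p - 1) = 2 := by omega
        rwa [this] at hd
      · have hpodd : p % 2 = 1 := Nat.odd_iff.mp hodd
        exact Nat.dvd_gcd (by omega) (by omega)
    have : p ∣ Nat.gcd (Nat.fib (p + 1)) (Nat.fib (p - 1)) := Nat.dvd_gcd hdvd2 hfib1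
    rw [← Nat.fib_gcd, hgcd] at this
    simp [Nat.fib] at this
    omega
  have hmod : p % 5 = 2 ∨ p % 5 = 3 := by omega
  refine ⟨?_, ?_, hp5⟩
  · rintro (h | h)
    · have h' : (p : ℤ) % 5 = 1 % 5 := h
      omega
    · have h' : (p : ℤ) % 5 = (-1) % 5 := h
      omega
  · rcases hmod with h | h
    · left; show (p : ℤ) % 5 = 2 % 5; omega
    · right; show (p : ℤ) % 5 = (-2) % 5; omega
end
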